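/- Assume A ≠ ∅. Then the weak*-closure of the characteristic cone K of σ equals the epigraph of the conjugate of the indicator of A, i.e. w*-cl K = epi δ_A*. -/

import Mathlib

open Pointwise

noncomputable section

variable {X : Type*} [AddCommGroup X] [Module ℝ X] [TopologicalSpace X]

/-- Fenchel conjugate, as a function on the weak-* dual. -/
def conjFn (h : X → EReal) : WeakDual ℝ X → EReal :=
  fun p => ⨆ x : X, (p x : EReal) - h x

/-- Epigraph of an extended-real-valued function. -/
def epiFn {V : Type*} (h : V → EReal) : Set (V × ℝ) :=
  {q | h q.1 ≤ (q.2 : EReal)}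

/-- Graph of an extended-real-valued function (where it is finite). -/
def gphFn {V : Type*} (h : V → EReal) : Set (V × ℝ) :=
  {q | h q.1 = (q.2 : EReal)}

/-- Effective domain. -/
def domFn {V : Type*} (h : V → EReal) : Set V :=
  {x | h x < ⊤}

open Classical in
/-- Indicator function of a set. -/
def indicatorE {V : Type*} (D : Set V) : V → EReal :=
  fun x => if x ∈ D then (0 : EReal) else ⊤

/-- Convex cone generated by `D ∪ {0}`. -/
def coneGen {V : Type*} [AddCommGroup V] [Module ℝ V] (D : Set V) : Set V :=
  {0} ∪ {y | ∃ t : ℝ, 0 ≤ t ∧ ∃ x ∈ convexHull ℝ D, y = t • x}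

/-- `h ∈ Γ(X)`: proper, convex and lower semicontinuous. -/
def InGamma (h : X → EReal) : Prop :=
  (∀ x, h x ≠ ⊥) ∧ (∃ x, h x ≠ ⊤) ∧
    Convex ℝ {q : X × ℝ | h q.1 ≤ (q.2 : EReal)} ∧ LowerSemicontinuous h

/-- Solution set `A` of the system `σ = {f i x ≤ 0, i ∈ I; x ∈ C}`. -/
def solSet {I : Type*} (C : Set X) (f : I → X → EReal) : Set X :=
  {x | x ∈ C ∧ ∀ i, f i x ≤ (0 : EReal)}

/-- Characteristic cone `K = cone (epi δ_C* ∪ ⋃ i, epi f_i*)` of the system. -/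
def charCone {I : Type*} (C : Set X) (f : I → X → EReal) : Set (WeakDual ℝ X × ℝ) :=
  coneGen (epiFn (conjFn (indicatorE C)) ∪ ⋃ i, epiFn (conjFn (f i)))

/-- Barrier cone `barr C = dom δ_C*`. -/
def barCone (C : Set X) : Set (WeakDual ℝ X) :=
  domFn (conjFn (indicatorE C))

/-- The Farkas–Minkowski constraint qualification. -/
def IsFM {I : Type*} (C : Set X) (f : I → X → EReal) : Prop :=
  (solSet C f).Nonempty ∧ IsClosed (charCone C f)

/-- Recession function `h^∞ = δ*_{dom h*}`. -/
def recFn (h : X → EReal) : X → EReal :=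
  fun x => ⨆ q ∈ domFn (conjFn h), ((q x : ℝ) : EReal)

/-- Recession cone `D^∞ = ⋂_{t>0} t (D - a)`, for any `a ∈ D`. -/
def recCone (D : Set X) : Set X :=
  {d | ∀ a ∈ D, ∀ t : ℝ, 0 < t → d ∈ t • (D - ({a} : Set X))}

/-- Subdifferential of `h` at `a`. -/
def subdiff (h : X → EReal) (a : X) : Set (WeakDual ℝ X) :=
  {p | (∃ r : ℝ, h a = (r : EReal)) ∧ ∀ x, h a + ((p (x - a) : ℝ) : EReal) ≤ h x}

section AuxLemmas

-- AUX

instance : LocallyConvexSpace ℝ (WeakDual ℝ X) := WeakBilin.locallyConvexSpace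

def toWD (q : X →L[ℝ] ℝ) : WeakDual ℝ X := q

lemma toWD_apply (q : X →L[ℝ] ℝ) (x : X) : toWD q x = q x := rfl

lemma ereal_real {a : EReal} (h1 : a ≠ ⊥) (h2 : a ≠ ⊤) : ∃ r : ℝ, a = (r : EReal) := by
  induction a using EReal.rec with
  | bot => exact absurd rfl h1
  | coe r => exact ⟨r, rfl⟩
  | top => exact absurd rfl h2

lemma conj_le_iff (h : X → EReal) (p : WeakDual ℝ X) (e : EReal) :
    conjFn h p ≤ e ↔ ∀ x, (p x : EReal) - h x ≤ e := iSup_le_iff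

lemma conj_ind_le_iff (D : Set X) (p : WeakDual ℝ X) (e : EReal) :
    conjFn (indicatorE D) p ≤ e ↔ ∀ x ∈ D, (p x : EReal) ≤ e := by
  rw [conj_le_iff]
  constructor
  · intro H x hx
    have := H x
    rwa [indicatorE, if_pos hx, sub_zero] at this
  · intro H x
    by_cases hx : x ∈ D
    · rw [indicatorE, if_pos hx, sub_zero]; exact H x hx
    · rw [indicatorE, if_neg hx]; simp

lemma conj_le_real {g : X → EReal} {q : WeakDual ℝ X} {t : ℝ} (h : conjFn g q ≤ (t : EReal))
    {z : X} {r : ℝ} (hz : g z = (r : EReal)) : q z - r ≤ t := by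
  have := (conj_le_iff g q t).1 h z
  rw [hz] at this
  exact_mod_cast this

section ConeGen
variable {V : Type*} [AddCommGroup V] [Module ℝ V]

lemma zero_mem_coneGen (D : Set V) : (0 : V) ∈ coneGen D := Or.inl rfl

lemma subset_coneGen (D : Set V) : D ⊆ coneGen D := fun x hx =>
  Or.inr ⟨1, zero_le_one, x, subset_convexHull ℝ D hx, (one_smul ℝ x).symm⟩

lemma smul_mem_coneGen {D : Set V} {t : ℝ} (ht : 0 ≤ t) {z : V} (hz : z ∈ coneGen D) :
    t • z ∈ coneGen D := by
  rcases hz with hz | ⟨s, hs, x, hx, rfl⟩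
  · rw [Set.mem_singleton_iff] at hz; subst hz; rw [smul_zero]; exact Or.inl rfl
  · exact Or.inr ⟨t * s, mul_nonneg ht hs, x, hx, (mul_smul t s x).symm⟩

lemma convex_coneGen (D : Set V) : Convex ℝ (coneGen D) := by
  rintro z1 h1 z2 h2 a b ha hb hab
  rcases h1 with h1 | ⟨t1, ht1, x1, hx1, rfl⟩
  · rw [Set.mem_singleton_iff] at h1; subst h1
    rw [smul_zero, zero_add]
    exact smul_mem_coneGen hb h2
  rcases h2 with h2 | ⟨t2, ht2, x2, hx2, rfl⟩
  · rw [Set.mem_singleton_iff] at h2; subst h2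
    rw [smul_zero, add_zero]
    exact smul_mem_coneGen ha (Or.inr ⟨t1, ht1, x1, hx1, rfl⟩)
  rw [smul_smul, smul_smul]
  set c := a * t1 + b * t2 with hc
  have hat1 : 0 ≤ a * t1 := mul_nonneg ha ht1
  have hbt2 : 0 ≤ b * t2 := mul_nonneg hb ht2
  rcases eq_or_lt_of_le (add_nonneg hat1 hbt2) with hc0 | hc0
  · have h1 : a * t1 = 0 := by linarith [hat1, hbt2]
    have h2 : b * t2 = 0 := by linarith [hat1, hbt2]
    rw [h1, h2, zero_smul, zero_smul, add_zero]
    exact Or.inl rfl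
  · refine Or.inr ⟨c, le_of_lt hc0, (a * t1 / c) • x1 + (b * t2 / c) • x2, ?_, ?_⟩
    · exact (convex_convexHull ℝ D) hx1 hx2 (div_nonneg hat1 hc0.le) (div_nonneg hbt2 hc0.le)
        (by rw [← add_div]; exact div_self hc0.ne')
    · rw [smul_add, smul_smul, smul_smul, mul_div_cancel₀ _ hc0.ne', mul_div_cancel₀ _ hc0.ne']

end ConeGen

-- epigraph closed from lsc
lemma isClosed_epiFn {g : X → EReal} (hg : LowerSemicontinuous g) : IsClosed (epiFn g) := by
  rw [← isOpen_compl_iff, isOpen_iff_mem_nhds]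
  rintro ⟨z, u⟩ hzu
  have hu : ((u : ℝ) : EReal) < g z := not_le.1 hzu
  obtain ⟨c, hc1, hc2⟩ : ∃ c : ℝ, u < c ∧ ((c : ℝ) : EReal) < g z := by
    by_cases htop : g z = ⊤
    · exact ⟨u + 1, by linarith, by rw [htop]; exact EReal.coe_lt_top _⟩
    · obtain ⟨r, hr⟩ := ereal_real (fun hb => by rw [hb] at hu; simp at hu) htop
      rw [hr] at hu ⊢
      have hur : u < r := by exact_mod_cast hu
      exact ⟨(u + r) / 2, by linarith, by exact_mod_cast (by linarith : (u+r)/2 < r)⟩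
  have h1 : {w | ((c : ℝ) : EReal) < g w} ∈ nhds z := hg z _ hc2
  rw [nhds_prod_eq, Filter.mem_prod_iff]
  refine ⟨{w | ((c : ℝ) : EReal) < g w}, h1, Set.Iio c, Iio_mem_nhds hc1, ?_⟩
  rintro ⟨w, v⟩ ⟨hw, hv⟩
  simp only [Set.mem_compl_iff, epiFn, Set.mem_setOf_eq, not_le]
  exact lt_trans (by exact_mod_cast hv) hw

-- separating functional has nonneg vertical component
lemma sep_vert_nonneg {g : X → EReal} {z0 : X} {r0 : ℝ} (hz0 : g z0 = (r0 : EReal))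
    {q0 : X →L[ℝ] ℝ} {s β : ℝ}
    (hsep : ∀ (z : X) (u : ℝ), g z ≤ (u : EReal) → β < q0 z + u * s) : 0 ≤ s := by
  by_contra hs
  push_neg at hs
  set u := max r0 ((β - q0 z0) / s) with hu
  have h1 : β < q0 z0 + u * s := hsep z0 u (by rw [hz0]; exact_mod_cast le_max_left _ _)
  have h2 : u * s ≤ ((β - q0 z0) / s) * s :=
    mul_le_mul_of_nonpos_right (le_max_right _ _) hs.le
  rw [div_mul_cancel₀ _ hs.ne] at h2
  linarith

-- from a separating functional with positive vertical part, a conjugate bound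
lemma lemmaB {g : X → EReal} (hbot : ∀ z, g z ≠ ⊥) {q0 : X →L[ℝ] ℝ} {s β : ℝ}
    (hs : 0 < s) (hsep : ∀ (z : X) (u : ℝ), g z ≤ (u : EReal) → β < q0 z + u * s) :
    conjFn g (toWD ((-s⁻¹) • q0)) ≤ ((-β / s : ℝ) : EReal) := by
  rw [conj_le_iff]
  intro z
  by_cases hz : g z = ⊤
  · rw [hz]; simp
  · obtain ⟨r, hr⟩ := ereal_real (hbot z) hz
    rw [hr]
    have h1 : β < q0 z + r * s := hsep z r (le_of_eq hr)
    have h2 : toWD ((-s⁻¹) • q0) z = -s⁻¹ * q0 z := rfl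
    rw [h2, show ((((-s⁻¹ * q0 z : ℝ)) : EReal) - (r : EReal)) = ((-s⁻¹ * q0 z - r : ℝ) : EReal)
      from by norm_cast, EReal.coe_le_coe_iff]
    rw [neg_div, div_eq_inv_mul]
    have h3 : s⁻¹ * β < s⁻¹ * (q0 z + r * s) := by
      exact mul_lt_mul_of_pos_left h1 (inv_pos.2 hs)
    have h4 : s⁻¹ * (r * s) = r := by field_simp
    rw [mul_add, h4] at h3
    linarith

lemma clm_prod_decomp {E₁ : Type*} [AddCommGroup E₁] [Module ℝ E₁] [TopologicalSpace E₁]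
    (φ : E₁ × ℝ →L[ℝ] ℝ) (z : E₁) (u : ℝ) :
    φ (z, u) = φ (z, 0) + u * φ (0, 1) := by
  have h : (z, u) = ((z, (0:ℝ)) : E₁ × ℝ) + u • ((0 : E₁), (1:ℝ)) := by
    simp [Prod.ext_iff]
  rw [h, map_add, map_smul, smul_eq_mul]

theorem lemmaA [IsTopologicalAddGroup X] [ContinuousSMul ℝ X] [LocallyConvexSpace ℝ X]
    {g : X → EReal} (hbot : ∀ z, g z ≠ ⊥) {z0 : X} {r0 : ℝ} (hz0 : g z0 = (r0 : EReal))
    (hcl : IsClosed (epiFn g)) (hcv : Convex ℝ (epiFn g)) {y : X}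
    (H : ∀ (q : WeakDual ℝ X) (t : ℝ), conjFn g q ≤ (t : EReal) → (q y : EReal) ≤ (t : EReal)) :
    g y ≤ 0 := by
  by_contra hy
  have hyne : ((y, (0:ℝ)) : X × ℝ) ∉ epiFn g := by
    intro hmem
    exact hy (by exact_mod_cast hmem)
  obtain ⟨φ, β, hβ1, hβ2⟩ := geometric_hahn_banach_point_closed hcv hcl hyne
  set q0 : X →L[ℝ] ℝ := φ.comp (ContinuousLinearMap.inl ℝ X ℝ) with hq0
  set s : ℝ := φ (0, 1) with hs
  have hdec : ∀ (z : X) (u : ℝ), φ (z, u) = q0 z + u * s := fun z u => clm_prod_decomp φ z u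
  have hsep : ∀ (z : X) (u : ℝ), g z ≤ (u : EReal) → β < q0 z + u * s := by
    intro z u hz
    rw [← hdec]
    exact hβ2 (z, u) hz
  have hβy : q0 y < β := by
    have := hβ1
    rw [hdec y 0, zero_mul, add_zero] at this
    exact this
  have hs0 : 0 ≤ s := sep_vert_nonneg hz0 hsep
  rcases eq_or_lt_of_le hs0 with hseq | hspos
  · -- s = 0 : vertical separation
    have hsep0 : ∀ (z : X) (u : ℝ), g z ≤ (u : EReal) → β < q0 z := by
      intro z u hz
      have := hsep z u hz
      rw [← hseq, mul_zero, add_zero] at this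
      exact this
    -- second separation below the epigraph at (z0, r0 - 1)
    have hne2 : ((z0, r0 - 1) : X × ℝ) ∉ epiFn g := by
      intro hmem
      have : g z0 ≤ ((r0 - 1 : ℝ) : EReal) := hmem
      rw [hz0] at this
      have : r0 ≤ r0 - 1 := by exact_mod_cast this
      linarith
    obtain ⟨φ2, β2, hb1, hb2⟩ := geometric_hahn_banach_point_closed hcv hcl hne2
    set q1 : X →L[ℝ] ℝ := φ2.comp (ContinuousLinearMap.inl ℝ X ℝ) with hq1
    set s1 : ℝ := φ2 (0, 1) with hs1
    have hdec2 : ∀ (z : X) (u : ℝ), φ2 (z, u) = q1 z + u * s1 := fun z u => clm_prod_decomp φ2 z u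
    have hsep2 : ∀ (z : X) (u : ℝ), g z ≤ (u : EReal) → β2 < q1 z + u * s1 := by
      intro z u hz
      rw [← hdec2]; exact hb2 (z, u) hz
    have hs10 : 0 ≤ s1 := sep_vert_nonneg hz0 hsep2
    have hs1pos : 0 < s1 := by
      rcases eq_or_lt_of_le hs10 with h0 | h; swap; exact h
      exfalso
      have e1 : φ2 (z0, r0 - 1) = q1 z0 + (r0-1) * s1 := hdec2 z0 (r0-1)
      have e2 : β2 < q1 z0 + r0 * s1 := hsep2 z0 r0 (le_of_eq hz0)
      rw [← h0, mul_zero, add_zero] at e2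
      rw [← h0, mul_zero, add_zero] at e1
      rw [e1] at hb1
      linarith
    -- base conjugate point
    have hq' := lemmaB hbot hs1pos hsep2
    set q' : WeakDual ℝ X := toWD ((-s1⁻¹) • q1) with hq'def
    set τ : ℝ := -β2 / s1 with hτ
    -- for every μ ≥ 0 : conjFn g (q' + μ • toWD (-q0)) ≤ τ + μ * (-β)
    have key : ∀ μ : ℝ, 0 ≤ μ → (q' y : ℝ) + μ * (-(q0 y)) ≤ τ + μ * (-β) := by
      intro μ hμ
      have hbound : conjFn g (q' + μ • toWD (-q0)) ≤ ((τ + μ * (-β) : ℝ) : EReal) := by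
        rw [conj_le_iff]
        intro z
        by_cases hz : g z = ⊤
        · rw [hz]; simp
        · obtain ⟨r, hr⟩ := ereal_real (hbot z) hz
          rw [hr]
          have h1 : q' z - r ≤ τ := conj_le_real hq' hr
          have h2 : β < q0 z := hsep0 z r (le_of_eq hr)
          have happ : (q' + μ • toWD (-q0)) z = q' z + μ * (-(q0 z)) := rfl
          rw [happ]
          rw [show ((((q' z + μ * (-(q0 z)) : ℝ)) : EReal) - (r : EReal))
            = ((q' z + μ * (-(q0 z)) - r : ℝ) : EReal) from by norm_cast, EReal.coe_le_coe_iff]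
          have h3 : μ * (-(q0 z)) ≤ μ * (-β) := by
            apply mul_le_mul_of_nonneg_left _ hμ
            linarith
          linarith
      have := H _ _ hbound
      have happy : (q' + μ • toWD (-q0)) y = q' y + μ * (-(q0 y)) := rfl
      rw [happy] at this
      exact_mod_cast this
    -- contradiction : take μ large
    have hgap : 0 < β - q0 y := by linarith
    set μ := max 0 ((τ - q' y) / (β - q0 y)) + 1 with hμdef
    have hμ0 : 0 ≤ μ := by positivity
    have h5 := key μ hμ0
    have h6 : (τ - q' y) / (β - q0 y) < μ := by
      have := le_max_right 0 ((τ - q' y) / (β - q0 y))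
      linarith
    have h7 : τ - q' y < μ * (β - q0 y) := by
      rw [div_lt_iff₀ hgap] at h6
      linarith [h6]
    nlinarith [h5, h7]
  · -- s > 0
    have hq := lemmaB hbot hspos hsep
    have := H _ _ hq
    have hcoe : (toWD ((-s⁻¹) • q0) y : ℝ) ≤ -β / s := by exact_mod_cast this
    have happ : toWD ((-s⁻¹) • q0) y = -s⁻¹ * q0 y := rfl
    rw [happ] at hcoe
    have h8 : s⁻¹ * β ≤ s⁻¹ * (q0 y) := by
      rw [neg_div, div_eq_inv_mul] at hcoe
      linarith
    have := mul_lt_mul_of_pos_left hβy (inv_pos.2 hspos)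
    linarith

/-- Evaluation at a point, as a linear functional on the weak-* dual. -/
def evalLM (x : X) : WeakDual ℝ X →ₗ[ℝ] ℝ where
  toFun q := q x
  map_add' _ _ := rfl
  map_smul' _ _ := rfl

lemma evalLM_apply (x : X) (q : WeakDual ℝ X) : evalLM x q = q x := rfl

/-- Every continuous linear functional on the weak-* dual is evaluation at a point. -/
lemma weakDual_dual_eval (ψ : WeakDual ℝ X →L[ℝ] ℝ) :
    ∃ x : X, ∀ q : WeakDual ℝ X, ψ q = q x := by
  have h1 : ψ ⁻¹' (Set.Ioo (-1 : ℝ) 1) ∈ nhds (0 : WeakDual ℝ X) :=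
    ψ.continuous.continuousAt.preimage_mem_nhds
      (by rw [map_zero]; exact Ioo_mem_nhds (by norm_num) (by norm_num))
  rw [show (nhds (0 : WeakDual ℝ X))
      = Filter.comap (fun (q : WeakDual ℝ X) (y : X) => q y) (nhds (fun y : X => (0 : WeakDual ℝ X) y))
      from nhds_induced _ _] at h1
  obtain ⟨S, hS, hSsub⟩ := Filter.mem_comap.1 h1
  have hzero : (fun y : X => (0 : WeakDual ℝ X) y) = (0 : X → ℝ) := rfl
  rw [hzero, nhds_pi] at hS
  obtain ⟨I, hIfin, t, ht, hts⟩ := Filter.mem_pi.1 hS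
  -- kernel claim
  have hker : ∀ q : WeakDual ℝ X, (∀ x ∈ I, q x = 0) → ψ q = 0 := by
    intro q hq
    by_contra hne
    set c : ℝ := 2 / ψ q with hc
    have hmem : (fun y : X => (c • q) y) ∈ S := by
      apply hts
      intro x hx
      show (c • q) x ∈ t x
      have he : (c • q) x = c * q x := rfl
      rw [he, hq x hx, mul_zero]
      exact mem_of_mem_nhds (ht x)
    have : ψ (c • q) ∈ Set.Ioo (-1 : ℝ) 1 := hSsub hmem
    rw [map_smul, smul_eq_mul, hc, div_mul_cancel₀ _ hne] at this
    simp only [Set.mem_Ioo] at this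
    linarith [this.2]
  -- linear algebra
  haveI := hIfin.fintype
  set L : I → (WeakDual ℝ X →ₗ[ℝ] ℝ) := fun i => evalLM (i : X) with hL
  have hinf : (⨅ i : I, LinearMap.ker (L i)) ≤ LinearMap.ker (ψ : WeakDual ℝ X →ₗ[ℝ] ℝ) := by
    intro q hq
    rw [Submodule.mem_iInf] at hq
    have : ∀ x ∈ I, q x = 0 := by
      intro x hx
      exact hq ⟨x, hx⟩
    exact hker q this
  have hspan := mem_span_of_iInf_ker_le_ker hinf
  obtain ⟨c, hc⟩ := (Submodule.mem_span_range_iff_exists_fun ℝ).1 hspan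
  refine ⟨∑ i : I, c i • (i : X), fun q => ?_⟩
  have := congrArg (fun T : WeakDual ℝ X →ₗ[ℝ] ℝ => T q) hc
  simp only [LinearMap.coe_sum, Finset.sum_apply, LinearMap.smul_apply,
    ContinuousLinearMap.coe_coe] at this
  rw [← this, map_sum q]
  refine Finset.sum_congr rfl fun i _ => ?_
  rw [map_smul q, smul_eq_mul]
  rfl

lemma ereal_neg_nonneg {a : EReal} : 0 ≤ -a ↔ a ≤ 0 := by
  nth_rewrite 1 [← neg_zero]; exact EReal.neg_le_neg_iff


end AuxLemmas

/-- Lemma 2: `w*-cl K = epi δ_A*` whenever `A ≠ ∅`. -/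
theorem stmt2 [IsTopologicalAddGroup X] [ContinuousSMul ℝ X] [LocallyConvexSpace ℝ X] [T2Space X] {I : Type*} (C : Set X) (hCne : C.Nonempty) (hCcl : IsClosed C) (hCcv : Convex ℝ C)
    (f : I → X → EReal) (hf : ∀ i, InGamma (f i))
    (hA : (solSet C f).Nonempty) :
    closure (charCone C f) = epiFn (conjFn (indicatorE (solSet C f))) := by
  set A := solSet C f with hAdef
  set D := epiFn (conjFn (indicatorE C)) ∪ ⋃ i, epiFn (conjFn (f i)) with hD
  set E := epiFn (conjFn (indicatorE A)) with hE
  have hKdef : charCone C f = coneGen D := rfl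
  have hAC : A ⊆ C := fun x hx => hx.1
  -- membership characterization of E
  have memE : ∀ (p : WeakDual ℝ X) (r : ℝ), ((p, r) ∈ E ↔ ∀ x ∈ A, p x ≤ r) := by
    intro p r
    have : ((p, r) ∈ E) = (conjFn (indicatorE A) p ≤ (r : EReal)) := rfl
    rw [this, conj_ind_le_iff]
    constructor
    · intro h x hx; exact_mod_cast h x hx
    · intro h x hx; exact_mod_cast h x hx
  have hEzero : ((0 : WeakDual ℝ X), (0 : ℝ)) ∈ E := by
    rw [memE]; intro x _; exact le_of_eq rfl
  have hEsmul : ∀ (t : ℝ), 0 ≤ t → ∀ z ∈ E, t • z ∈ E := by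
    rintro t ht ⟨p, r⟩ hz
    rw [memE] at hz
    have he : t • ((p, r) : WeakDual ℝ X × ℝ) = (t • p, t * r) := rfl
    rw [he, memE]
    intro x hx
    have e : (t • p) x = t * p x := rfl
    rw [e]
    exact mul_le_mul_of_nonneg_left (hz x hx) ht
  have hEconv : Convex ℝ E := by
    rintro ⟨p1, r1⟩ h1 ⟨p2, r2⟩ h2 a b ha hb _
    rw [memE] at h1 h2
    have he : a • ((p1, r1) : WeakDual ℝ X × ℝ) + b • (p2, r2) = (a • p1 + b • p2, a * r1 + b * r2) := rfl
    rw [he, memE]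
    intro x hx
    have e : (a • p1 + b • p2) x = a * p1 x + b * p2 x := rfl
    rw [e]
    exact add_le_add (mul_le_mul_of_nonneg_left (h1 x hx) ha)
      (mul_le_mul_of_nonneg_left (h2 x hx) hb)
  have hEcl : IsClosed E := by
    have : E = ⋂ x ∈ A, {q : WeakDual ℝ X × ℝ | q.1 x ≤ q.2} := by
      ext ⟨p, r⟩
      simp only [Set.mem_iInter, Set.mem_setOf_eq]
      exact memE p r
    rw [this]
    exact isClosed_biInter fun x _ =>
      isClosed_le ((WeakDual.eval_continuous x).comp continuous_fst) continuous_snd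
  -- D ⊆ E
  have hDE : D ⊆ E := by
    rintro ⟨q, t⟩ hq
    rw [memE]
    rcases hq with hq | hq
    · have h1 := (conj_ind_le_iff C q (t : EReal)).1 hq
      intro x hx
      exact_mod_cast h1 x (hAC hx)
    · rcases Set.mem_iUnion.1 hq with ⟨i, hi⟩
      have hper := (conj_le_iff (f i) q (t : EReal)).1 hi
      intro x hx
      have h1 : (q x : EReal) - f i x ≤ (t : EReal) := hper x
      have h3 : (q x : EReal) ≤ (q x : EReal) - f i x := by
        rw [sub_eq_add_neg]
        exact le_add_of_nonneg_right (ereal_neg_nonneg.2 (hx.2 i))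
      exact_mod_cast le_trans h3 h1
  -- K ⊆ E
  have hKE : charCone C f ⊆ E := by
    intro z hz
    rw [hKdef] at hz
    rcases hz with hz | ⟨t, ht, x, hx, rfl⟩
    · rw [Set.mem_singleton_iff] at hz; subst hz; exact hEzero
    · exact hEsmul t ht x (convexHull_min hDE hEconv hx)
  apply Set.Subset.antisymm
  · exact closure_minimal hKE hEcl
  -- hard direction
  rintro ⟨p, r⟩ hzE
  by_contra hzK
  have hKcv : Convex ℝ (closure (charCone C f)) := by
    rw [hKdef]; exact (convex_coneGen D).closure
  obtain ⟨φ, β, hφ1, hφ2⟩ := geometric_hahn_banach_closed_point hKcv isClosed_closure hzK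
  have h0K : ((0 : WeakDual ℝ X × ℝ)) ∈ closure (charCone C f) :=
    subset_closure (by rw [hKdef]; exact zero_mem_coneGen D)
  have hβpos : 0 < β := by
    have := hφ1 _ h0K; rwa [map_zero] at this
  have hφK : ∀ w ∈ charCone C f, φ w ≤ 0 := by
    intro w hw
    by_contra hpos
    push_neg at hpos
    have hc : (β / φ w) • w ∈ charCone C f := by
      rw [hKdef] at hw ⊢
      exact smul_mem_coneGen (le_of_lt (div_pos hβpos hpos)) hw
    have := hφ1 _ (subset_closure hc)
    rw [map_smul, smul_eq_mul, div_mul_cancel₀ _ (ne_of_gt hpos)] at this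
    exact lt_irrefl _ this
  set s : ℝ := φ (0, 1) with hs
  obtain ⟨x, hx⟩ := weakDual_dual_eval (φ.comp (ContinuousLinearMap.inl ℝ (WeakDual ℝ X) ℝ))
  have hdec : ∀ (q : WeakDual ℝ X) (t : ℝ), φ (q, t) = q x + t * s := by
    intro q t
    have h1 := clm_prod_decomp φ q t
    have h2 : φ (q, 0) = q x := by
      have := hx q
      simpa using this
    rw [h1, h2]
  have hKx : ∀ (q : WeakDual ℝ X) (t : ℝ), (q, t) ∈ charCone C f → q x + t * s ≤ 0 := by
    intro q t hqt
    have := hφK _ hqt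
    rwa [hdec] at this
  have h01K : ((0 : WeakDual ℝ X), (1 : ℝ)) ∈ charCone C f := by
    rw [hKdef]
    apply subset_coneGen
    left
    show conjFn (indicatorE C) 0 ≤ ((1 : ℝ) : EReal)
    rw [conj_ind_le_iff]
    intro z _
    have e : ((0 : WeakDual ℝ X)) z = (0 : ℝ) := rfl
    rw [e]
    exact_mod_cast zero_le_one
  have hsle : s ≤ 0 := by
    have h1 := hKx 0 1 h01K
    have e : (0 : WeakDual ℝ X) x = 0 := rfl
    rw [e, one_mul, zero_add] at h1
    exact h1
  have hpr : 0 < p x + r * s := by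
    have h2 := hφ2
    rw [hdec p r] at h2
    linarith
  -- properness / closedness data for indicatorE C
  obtain ⟨c0, hc0⟩ := hCne
  have hbotC : ∀ z, indicatorE C z ≠ ⊥ := by
    intro z
    simp only [indicatorE]
    split <;> simp
  have hc0val : indicatorE C c0 = ((0 : ℝ) : EReal) := by
    simp only [indicatorE, if_pos hc0]; rfl
  have hepiC : epiFn (indicatorE C) = C ×ˢ Set.Ici (0 : ℝ) := by
    ext ⟨z, u⟩
    simp only [epiFn, Set.mem_setOf_eq, Set.mem_prod, Set.mem_Ici, indicatorE]
    by_cases hz : z ∈ C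
    · rw [if_pos hz]
      constructor
      · intro h; exact ⟨hz, by exact_mod_cast h⟩
      · intro h; exact_mod_cast h.2
    · rw [if_neg hz]
      constructor
      · intro h; exact absurd h (by simp)
      · intro h; exact absurd h.1 hz
  have hclC : IsClosed (epiFn (indicatorE C)) := by rw [hepiC]; exact hCcl.prod isClosed_Ici
  have hcvC : Convex ℝ (epiFn (indicatorE C)) := by rw [hepiC]; exact hCcv.prod (convex_Ici 0)
  have indC_mem : ∀ y : X, indicatorE C y ≤ 0 → y ∈ C := by
    intro y hy
    by_contra hyC
    simp only [indicatorE, if_neg hyC] at hy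
    exact absurd hy (by simp)
  -- inclusions of the epigraphs into K
  have hsubC : epiFn (conjFn (indicatorE C)) ⊆ charCone C f := by
    rw [hKdef]; exact fun w hw => subset_coneGen D (Or.inl hw)
  have hsubf : ∀ i, epiFn (conjFn (f i)) ⊆ charCone C f := by
    intro i
    rw [hKdef]
    exact fun w hw => subset_coneGen D (Or.inr (Set.mem_iUnion.2 ⟨i, hw⟩))
  rcases lt_or_eq_of_le hsle with hslt | hseq
  · -- s < 0
    have hns : (0 : ℝ) < -s := by linarith
    set y : X := (-s)⁻¹ • x with hy
    have Hbuild : ∀ (g : X → EReal), epiFn (conjFn g) ⊆ charCone C f →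
        ∀ (q : WeakDual ℝ X) (t : ℝ), conjFn g q ≤ (t : EReal) → ((q y : ℝ) : EReal) ≤ (t : EReal) := by
      intro g hsub q t hqt
      have h1 := hKx q t (hsub hqt)
      have h2 : q y = (-s)⁻¹ * q x := by
        rw [hy, map_smul]; rfl
      have h3 : q x ≤ t * (-s) := by nlinarith
      have h4 : (-s)⁻¹ * q x ≤ t := by
        have h5 := mul_le_mul_of_nonneg_left h3 (inv_nonneg.2 hns.le)
        rwa [mul_comm t (-s), ← mul_assoc, inv_mul_cancel₀ (ne_of_gt hns), one_mul] at h5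
      rw [h2]
      exact_mod_cast h4
    have hyC : y ∈ C := indC_mem y (lemmaA hbotC hc0val hclC hcvC (Hbuild _ hsubC))
    have hyf : ∀ i, f i y ≤ 0 := by
      intro i
      obtain ⟨xi, hxi⟩ := (hf i).2.1
      obtain ⟨ri, hri⟩ := ereal_real ((hf i).1 xi) hxi
      exact lemmaA (hf i).1 hri (isClosed_epiFn (hf i).2.2.2) (hf i).2.2.1 (Hbuild _ (hsubf i))
    have hyA : y ∈ A := ⟨hyC, hyf⟩
    have hpy : p y ≤ r := (memE p r).1 hzE y hyA
    have hpy2 : p y = (-s)⁻¹ * p x := by rw [hy, map_smul]; rfl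
    rw [hpy2] at hpy
    have h6 := mul_le_mul_of_nonneg_left hpy hns.le
    rw [← mul_assoc, mul_inv_cancel₀ (ne_of_gt hns), one_mul] at h6
    nlinarith
  · -- s = 0
    obtain ⟨a, haA⟩ := hA
    have hpa : p a ≤ r := (memE p r).1 hzE a haA
    have hpx : 0 < p x := by
      rw [hseq, mul_zero, add_zero] at hpr
      exact hpr
    have hKx0 : ∀ (q : WeakDual ℝ X) (t : ℝ), (q, t) ∈ charCone C f → q x ≤ 0 := by
      intro q t h
      have h1 := hKx q t h
      rw [hseq, mul_zero, add_zero] at h1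
      exact h1
    have hmem : ∀ μ : ℝ, 0 ≤ μ → a + μ • x ∈ A := by
      intro μ hμ
      have Hb : ∀ (g : X → EReal), (∀ z, g z ≠ ⊥) → g a ≤ 0 → epiFn (conjFn g) ⊆ charCone C f →
          ∀ (q : WeakDual ℝ X) (t : ℝ), conjFn g q ≤ (t : EReal) →
            ((q (a + μ • x) : ℝ) : EReal) ≤ (t : EReal) := by
        intro g hgbot hga hsub q t hqt
        have h1 : (q a : EReal) - g a ≤ (t : EReal) := (conj_le_iff g q (t : EReal)).1 hqt a
        have h2 : (q a : EReal) ≤ (q a : EReal) - g a := by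
          rw [sub_eq_add_neg]
          exact le_add_of_nonneg_right (ereal_neg_nonneg.2 hga)
        have h3 : q a ≤ t := by exact_mod_cast le_trans h2 h1
        have h4 : q x ≤ 0 := hKx0 q t (hsub hqt)
        have h5 : q (a + μ • x) = q a + μ * q x := by rw [map_add, map_smul]; rfl
        rw [h5]
        have : q a + μ * q x ≤ t := by nlinarith
        exact_mod_cast this
      have hgaC : indicatorE C a ≤ 0 := by
        simp only [indicatorE, if_pos (hAC haA)]
        exact le_refl _
      refine ⟨?_, ?_⟩
      · exact indC_mem _ (lemmaA hbotC hc0val hclC hcvC (Hb _ hbotC hgaC hsubC))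
      · intro i
        obtain ⟨xi, hxi⟩ := (hf i).2.1
        obtain ⟨ri, hri⟩ := ereal_real ((hf i).1 xi) hxi
        exact lemmaA (hf i).1 hri (isClosed_epiFn (hf i).2.2.2) (hf i).2.2.1
          (Hb _ (hf i).1 (haA.2 i) (hsubf i))
    have hfin : ∀ μ : ℝ, 0 ≤ μ → p a + μ * p x ≤ r := by
      intro μ hμ
      have h7 : p (a + μ • x) ≤ r := (memE p r).1 hzE _ (hmem μ hμ)
      have h8 : p (a + μ • x) = p a + μ * p x := by rw [map_add, map_smul]; rfl
      rwa [h8] at h7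
    have hμ0 : (0 : ℝ) ≤ (r - p a) / p x + 1 := by
      have : 0 ≤ (r - p a) / p x := div_nonneg (by linarith) hpx.le
      linarith
    have h7 := hfin _ hμ0
    have h9 : ((r - p a) / p x) * p x = r - p a := div_mul_cancel₀ _ (ne_of_gt hpx)
    have h10 : ((r - p a) / p x + 1) * p x = (r - p a) + p x := by rw [add_mul, one_mul, h9]
    rw [h10] at h7
    linarith
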